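/- Let M be a non-faithful left module over a principal ideal domain R with Ann_R(M) = ⟨a⟩, a ≠ 0, and let a = u·p₁^{α₁}⋯p_n^{α_n} be its factorization into distinct primes p₁,…,p_n (u a unit, each α_i ≥ 1). Then M is the internal direct sum of the submodules Ann_M(p_i^{α_i}), i = 1,…,n, and M has a proper essential submodule if and only if Ann_M(p_i^{α_i}) has a proper essential submodule for some i. -/

import Mathlib

/-- `E` is a proper essential submodule of `M`: a proper nontrivial submodule that
intersects every nonzero submodule nontrivially. -/
def IsProperEssential {R M : Type*} [Ring R] [AddCommGroup M] [Module R M]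
    (E : Submodule R M) : Prop :=
  E ≠ ⊥ ∧ E ≠ ⊤ ∧ ∀ N : Submodule R M, N ≠ ⊥ → E ⊓ N ≠ ⊥

/-- A non-faithful module over a PID whose annihilator is generated by
`a = u * p₁^{α₁} ⋯ p_n^{α_n}` (distinct primes `pᵢ`, unit `u`) is the internal direct sum
of the submodules `Ann_M(pᵢ^{αᵢ})`, and it has a proper essential submodule iff some
`Ann_M(pᵢ^{αᵢ})` does. -/
theorem nonfaithful_pid_decomposition_properEssential {R M : Type*} [CommRing R] [IsDomain R]
    [IsPrincipalIdealRing R] [AddCommGroup M] [Module R M] (a : R) (ha : a ≠ 0)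
    (hann : Module.annihilator R M = Ideal.span {a})
    (n : ℕ) (u : R) (hu : IsUnit u) (p : Fin n → R) (hp : ∀ i, Prime (p i))
    (hdist : ∀ i j, i ≠ j → ¬ Associated (p i) (p j))
    (α : Fin n → ℕ) (hα : ∀ i, 1 ≤ α i)
    (hfac : a = u * ∏ i, p i ^ α i) :
    DirectSum.IsInternal (fun i : Fin n =>
      Submodule.torsionBy R M (p i ^ α i)) ∧
    ((∃ E : Submodule R M, IsProperEssential E) ↔
      ∃ i, ∃ E : Submodule R ↥(Submodule.torsionBy R M (p i ^ α i)),
        IsProperEssential E) := by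
  classical
  have htor : ∀ x : M, (∏ i, p i ^ α i) • x = 0 := by
    intro x
    have hax : a • x = 0 := by
      have : a ∈ Module.annihilator R M := by
        rw [hann]; exact Ideal.mem_span_singleton_self a
      exact Module.mem_annihilator.mp this x
    obtain ⟨v, hv⟩ := hu.exists_left_inv
    calc (∏ i, p i ^ α i) • x = (v * u * ∏ i, p i ^ α i) • x := by rw [hv, one_mul]
      _ = v • (a • x) := by rw [hfac, mul_assoc, mul_smul]
      _ = 0 := by rw [hax, smul_zero]
  have hcop : ∀ i j : Fin n, i ≠ j → IsCoprime (p i ^ α i) (p j ^ α j) := by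
    intro i j hij
    have h1 : ¬ p i ∣ p j := fun hdvd =>
      hdist i j hij (((hp i).associated_of_dvd (hp j)) hdvd)
    exact ((hp i).coprime_iff_not_dvd.mpr h1).pow
  have hpair : ((Finset.univ : Finset (Fin n)) : Set (Fin n)).Pairwise
      (Function.onFun IsCoprime fun i => p i ^ α i) := fun i _ j _ hij => hcop i j hij
  have hsup : ⨆ i, Submodule.torsionBy R M (p i ^ α i) = ⊤ := by
    have h := Submodule.iSup_torsionBy_eq_torsionBy_prod (M := M) (S := Finset.univ) hpair
    simp only [Finset.mem_univ, iSup_pos, iSup_univ] at h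
    rw [h]
    refine (Module.isTorsionBy_iff_torsionBy_eq_top _).mp ?_
    intro x
    exact htor x
  have hint : DirectSum.IsInternal (fun i : Fin n => Submodule.torsionBy R M (p i ^ α i)) := by
    refine DirectSum.isInternal_submodule_of_iSupIndep_of_iSup_eq_top ?_ hsup
    exact iSupIndep_iff_supIndep_univ.mpr (Submodule.supIndep_torsionBy hpair)
  refine ⟨hint, ?_, ?_⟩
  · -- forward
    rintro ⟨E, hE0, hET, hEess⟩
    have : ∃ i, ¬ Submodule.torsionBy R M (p i ^ α i) ≤ E := by
      by_contra h
      push_neg at h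
      exact hET (top_le_iff.mp (hsup ▸ iSup_le h))
    obtain ⟨i, hi⟩ := this
    refine ⟨i, E.comap (Submodule.torsionBy R M (p i ^ α i)).subtype, ?_, ?_, ?_⟩
    · have hMi : Submodule.torsionBy R M (p i ^ α i) ≠ ⊥ := fun h => hi (h ▸ bot_le)
      have h := hEess _ hMi
      rw [Submodule.ne_bot_iff] at h ⊢
      obtain ⟨x, hx, hx0⟩ := h
      exact ⟨⟨x, hx.2⟩, hx.1, by simpa using hx0⟩
    · intro h
      exact hi fun x hx =>
        (h ▸ Submodule.mem_top :
          (⟨x, hx⟩ : Submodule.torsionBy R M (p i ^ α i)) ∈ _)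
    · intro N hN
      have hN' : N.map (Submodule.torsionBy R M (p i ^ α i)).subtype ≠ ⊥ := by
        rw [Submodule.ne_bot_iff] at hN ⊢
        obtain ⟨y, hy, hy0⟩ := hN
        exact ⟨y.1, Submodule.mem_map_of_mem hy, fun h => hy0 (Subtype.ext h)⟩
      have h := hEess _ hN'
      rw [Submodule.ne_bot_iff] at h ⊢
      obtain ⟨x, ⟨hxE, hxN⟩, hx0⟩ := h
      obtain ⟨y, hyN, rfl⟩ := hxN
      exact ⟨y, ⟨hxE, hyN⟩, fun h => hx0 (congrArg Subtype.val h)⟩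
  · -- reverse
    rintro ⟨i, Ei, hEi0, hEiT, hEiess⟩
    have hprodw : ∏ j, p j ^ α j = p i ^ α i * ∏ j ∈ Finset.univ.erase i, p j ^ α j :=
      (Finset.mul_prod_erase Finset.univ _ (Finset.mem_univ i)).symm
    have hcw : IsCoprime (p i ^ α i) (∏ j ∈ Finset.univ.erase i, p j ^ α j) :=
      IsCoprime.prod_right fun j hj => hcop i j (Finset.ne_of_mem_erase hj).symm
    obtain ⟨c, d, hcd⟩ := hcw
    set w : R := ∏ j ∈ Finset.univ.erase i, p j ^ α j with hw
    set r : R := d * w with hr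
    have h1 : ∀ x : M, r • x ∈ Submodule.torsionBy R M (p i ^ α i) := by
      intro x
      rw [Submodule.mem_torsionBy_iff, smul_smul]
      have hkey : p i ^ α i * r = d * ∏ j, p j ^ α j := by rw [hr, hprodw]; ring
      rw [hkey, mul_smul, htor x, smul_zero]
    have h2 : ∀ x ∈ Submodule.torsionBy R M (p i ^ α i), r • x = x := by
      intro x hx
      have hx0 : (p i ^ α i) • x = 0 := (Submodule.mem_torsionBy_iff _ _).mp hx
      have h : (c * p i ^ α i + d * w) • x = x := by rw [hcd, one_smul]
      rwa [add_smul, mul_smul, hx0, smul_zero, zero_add] at h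
    have h3 : ∀ x : M, w • (x - r • x) = 0 := by
      intro x
      have key : w - w * r = c * ∏ j, p j ^ α j := by
        rw [hprodw, hr]; linear_combination (-w) * hcd
      rw [smul_sub, smul_smul, ← sub_smul, key, mul_smul, htor x, smul_zero]
    have hE'le : Ei.map (Submodule.torsionBy R M (p i ^ α i)).subtype ≤
        Submodule.torsionBy R M (p i ^ α i) := by
      rintro _ ⟨y, _, rfl⟩; exact y.2
    have hSr : ∀ x ∈ Submodule.torsionBy R M w, r • x = 0 := by
      intro x hx
      have h : w • x = 0 := (Submodule.mem_torsionBy_iff _ _).mp hx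
      rw [hr, mul_smul, h, smul_zero]
    refine ⟨Ei.map (Submodule.torsionBy R M (p i ^ α i)).subtype ⊔
      Submodule.torsionBy R M w, ?_, ?_, ?_⟩
    · rw [Submodule.ne_bot_iff] at hEi0 ⊢
      obtain ⟨y, hy, hy0⟩ := hEi0
      exact ⟨y.1, le_sup_left (α := Submodule R M) (Submodule.mem_map_of_mem hy),
        fun h => hy0 (Subtype.ext h)⟩
    · intro htop
      apply hEiT
      rw [Submodule.eq_top_iff']
      intro m
      have hm : (m : M) ∈ Ei.map (Submodule.torsionBy R M (p i ^ α i)).subtype ⊔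
          Submodule.torsionBy R M w := htop ▸ Submodule.mem_top
      obtain ⟨e, he, s, hs, heq⟩ := Submodule.mem_sup.mp hm
      have hme : (m : M) = e := by
        have h := h2 m.1 m.2
        rw [← heq, smul_add, h2 e (hE'le he), hSr s hs, add_zero] at h
        rw [← heq, ← h]
      obtain ⟨y, hy, hyv⟩ := he
      have hym : y = m := Subtype.ext (hyv.trans hme.symm)
      exact hym ▸ hy
    · intro N hN
      by_cases hcase : ∀ x ∈ N, r • x = 0
      · have hNle : N ≤ Ei.map (Submodule.torsionBy R M (p i ^ α i)).subtype ⊔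
            Submodule.torsionBy R M w := by
          refine le_trans ?_ le_sup_right
          intro x hx
          have h := h3 x
          rw [hcase x hx, sub_zero] at h
          exact (Submodule.mem_torsionBy_iff _ _).mpr h
        rwa [inf_of_le_right hNle]
      · push_neg at hcase
        obtain ⟨x, hxN, hx0⟩ := hcase
        have hN' : N.comap (Submodule.torsionBy R M (p i ^ α i)).subtype ≠ ⊥ := by
          rw [Submodule.ne_bot_iff]
          exact ⟨⟨r • x, h1 x⟩, N.smul_mem r hxN, fun h => hx0 (congrArg Subtype.val h)⟩
        have h := hEiess _ hN'
        rw [Submodule.ne_bot_iff] at h ⊢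
        obtain ⟨y, ⟨hyE, hyN⟩, hy0⟩ := h
        exact ⟨y.1, ⟨le_sup_left (α := Submodule R M) (Submodule.mem_map_of_mem hyE), hyN⟩,
          fun h => hy0 (Subtype.ext h)⟩
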